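/- Let (H_k, k) and (H_ℓ, ℓ) be RKHSs on a set X such that the pair (k, ℓ) has the Pick property, and let (λ_i) be a sequence of distinct points of X. If the Gram matrix of (λ_i) with respect to k is bounded and the Gram matrix of (λ_i) with respect to ℓ is bounded below, then (λ_i) is interpolating for Mult(H_k, H_ℓ). -/

import Mathlib

noncomputable section

open scoped InnerProductSpace ComplexOrder

/-- `φ : X → ℂ` is a multiplier from the RKHS on `X` with kernel map `k` to the RKHS with
kernel map `l`, implemented by the bounded operator `T`, i.e. `T* l_x = conj (φ x) • k_x`. -/
def IsMultiplier {X Hk Hl : Type*}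
    [NormedAddCommGroup Hk] [InnerProductSpace ℂ Hk] [CompleteSpace Hk]
    [NormedAddCommGroup Hl] [InnerProductSpace ℂ Hl] [CompleteSpace Hl]
    (k : X → Hk) (l : X → Hl) (φ : X → ℂ) (T : Hk →L[ℂ] Hl) : Prop :=
  ∀ x, ContinuousLinearMap.adjoint T (l x) = (starRingEnd ℂ) (φ x) • k x

/-- The sequence `lam` is an interpolating sequence for `Mult(H_k, H_l)`: every bounded
sequence of targets `α i * ‖l (lam i)‖ / ‖k (lam i)‖` is attained by a multiplier. -/
def InterpMultPair {X Hk Hl : Type*}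
    [NormedAddCommGroup Hk] [InnerProductSpace ℂ Hk] [CompleteSpace Hk]
    [NormedAddCommGroup Hl] [InnerProductSpace ℂ Hl] [CompleteSpace Hl]
    (k : X → Hk) (l : X → Hl) (lam : ℕ → X) : Prop :=
  ∀ α : ℕ → ℂ, (∃ B : ℝ, ∀ i, ‖α i‖ ≤ B) →
    ∃ (φ : X → ℂ) (T : Hk →L[ℂ] Hl), IsMultiplier k l φ T ∧
      ∀ i, φ (lam i) = α i * (‖l (lam i)‖ : ℂ) / (‖k (lam i)‖ : ℂ)

/-- The Gram matrix of the sequence `lam` with respect to the kernel map `k` is bounded. -/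
def GramBdd {X H : Type*} [NormedAddCommGroup H] [InnerProductSpace ℂ H]
    (k : X → H) (lam : ℕ → X) : Prop :=
  ∃ C > (0 : ℝ), ∀ (F : Finset ℕ) (a : ℕ → ℂ),
    ‖∑ i ∈ F, a i • (‖k (lam i)‖⁻¹ • k (lam i))‖ ^ 2 ≤ C * ∑ i ∈ F, ‖a i‖ ^ 2

/-- The Gram matrix of the sequence `lam` with respect to the kernel map `k` is
bounded below. -/
def GramBddBelow {X H : Type*} [NormedAddCommGroup H] [InnerProductSpace ℂ H]
    (k : X → H) (lam : ℕ → X) : Prop :=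
  ∃ c > (0 : ℝ), ∀ (F : Finset ℕ) (a : ℕ → ℂ),
    c * ∑ i ∈ F, ‖a i‖ ^ 2 ≤ ‖∑ i ∈ F, a i • (‖k (lam i)‖⁻¹ • k (lam i))‖ ^ 2

/-- The pair of kernels `(k, l)` has the Pick property: every finite positivity condition
guarantees a norm-one multiplier solving the corresponding interpolation problem. -/
def PickPair {X Hk Hl : Type*}
    [NormedAddCommGroup Hk] [InnerProductSpace ℂ Hk] [CompleteSpace Hk]
    [NormedAddCommGroup Hl] [InnerProductSpace ℂ Hl] [CompleteSpace Hl]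
    (k : X → Hk) (l : X → Hl) : Prop :=
  ∀ (n : ℕ) (p : Fin n → X), Function.Injective p → ∀ w : Fin n → ℂ,
    (∀ a : Fin n → ℂ,
      0 ≤ ∑ i, ∑ j, a i * (starRingEnd ℂ) (a j) *
        (⟪l (p j), l (p i)⟫_ℂ - w i * (starRingEnd ℂ) (w j) * ⟪k (p j), k (p i)⟫_ℂ)) →
    ∃ (φ : X → ℂ) (T : Hk →L[ℂ] Hl), IsMultiplier k l φ T ∧ ‖T‖ ≤ 1 ∧ ∀ i, φ (p i) = w i

open Filter


private lemma ulim_exists (U : Ultrafilter ℕ) (f : ℕ → ℂ) (M : ℝ) (hf : ∀ n, ‖f n‖ ≤ M) :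
    ∃ z : ℂ, Tendsto f (U : Filter ℕ) (nhds z) := by
  have hmem : (U.map f : Filter ℂ) ≤ Filter.principal (Metric.closedBall (0 : ℂ) M) := by
    rw [Filter.le_principal_iff]
    exact Filter.mem_map.mpr (Filter.univ_mem' fun n => by
      simpa [Metric.mem_closedBall, dist_zero_right] using hf n)
  obtain ⟨z, -, hz⟩ := (isCompact_closedBall (0 : ℂ) M).ultrafilter_le_nhds (U.map f) hmem
  exact ⟨z, hz⟩

private lemma sum_norm_smul {H : Type*} [NormedAddCommGroup H] [InnerProductSpace ℂ H]
    (g : ℕ → H) (hg : ∀ m, g m ≠ 0) (n : ℕ) (coef : Fin n → ℂ) :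
    ∑ m ∈ Finset.range n, (if h : m < n then coef ⟨m, h⟩ * (‖g m‖ : ℂ) else 0) •
      (‖g m‖⁻¹ • g m) = ∑ i : Fin n, coef i • g i := by
  rw [← Fin.sum_univ_eq_sum_range (fun m =>
    (if h : m < n then coef ⟨m, h⟩ * (‖g m‖ : ℂ) else 0) • (‖g m‖⁻¹ • g m)) n]
  refine Finset.sum_congr rfl fun i _ => ?_
  rw [dif_pos i.isLt, Fin.eta]
  rw [← Complex.coe_smul, smul_smul, Complex.ofReal_inv]
  have h0 : (‖g (i : ℕ)‖ : ℂ) ≠ 0 := by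
    exact_mod_cast norm_ne_zero_iff.mpr (hg i)
  rw [mul_assoc, mul_inv_cancel₀ h0, mul_one]


private lemma sum_norm_sq_eq {H : Type*} [NormedAddCommGroup H]
    (g : ℕ → H) (n : ℕ) (coef : Fin n → ℂ) :
    ∑ m ∈ Finset.range n, ‖if h : m < n then coef ⟨m, h⟩ * (‖g m‖ : ℂ) else 0‖ ^ 2
      = ∑ i : Fin n, ‖coef i‖ ^ 2 * ‖g i‖ ^ 2 := by
  rw [← Fin.sum_univ_eq_sum_range (fun m =>
    ‖if h : m < n then coef ⟨m, h⟩ * (‖g m‖ : ℂ) else 0‖ ^ 2) n]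
  refine Finset.sum_congr rfl fun i _ => ?_
  rw [dif_pos i.isLt, Fin.eta, norm_mul, Complex.norm_real, mul_pow]
  simp [abs_norm]

private lemma psd_lemma {X Hk Hl : Type*}
    [NormedAddCommGroup Hk] [InnerProductSpace ℂ Hk]
    [NormedAddCommGroup Hl] [InnerProductSpace ℂ Hl]
    (k : X → Hk) (hk : ∀ x, k x ≠ 0) (l : X → Hl) (hl : ∀ x, l x ≠ 0)
    (lam : ℕ → X) (C c : ℝ) (hC0 : 0 < C)
    (hC : ∀ (F : Finset ℕ) (a : ℕ → ℂ),
      ‖∑ i ∈ F, a i • (‖k (lam i)‖⁻¹ • k (lam i))‖ ^ 2 ≤ C * ∑ i ∈ F, ‖a i‖ ^ 2)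
    (hcl : ∀ (F : Finset ℕ) (a : ℕ → ℂ),
      c * ∑ i ∈ F, ‖a i‖ ^ 2 ≤ ‖∑ i ∈ F, a i • (‖l (lam i)‖⁻¹ • l (lam i))‖ ^ 2)
    (w : ℕ → ℂ)
    (hw : ∀ i : ℕ, ‖w i‖ ^ 2 * ‖k (lam i)‖ ^ 2 ≤ c / C * ‖l (lam i)‖ ^ 2)
    (n : ℕ) (a : Fin n → ℂ) :
    0 ≤ ∑ i, ∑ j, a i * (starRingEnd ℂ) (a j) *
        (⟪l (lam (j : ℕ)), l (lam (i : ℕ))⟫_ℂ -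
          w (i : ℕ) * (starRingEnd ℂ) (w (j : ℕ)) * ⟪k (lam (j : ℕ)), k (lam (i : ℕ))⟫_ℂ) := by
  set v : Hl := ∑ i : Fin n, a i • l (lam (i : ℕ)) with hv
  set u : Hk := ∑ i : Fin n, (a i * w (i : ℕ)) • k (lam (i : ℕ)) with hu
  have h1 : ⟪v, v⟫_ℂ = ∑ i, ∑ j, a i * (starRingEnd ℂ) (a j) *
      ⟪l (lam (j : ℕ)), l (lam (i : ℕ))⟫_ℂ := by
    rw [hv, sum_inner, Finset.sum_comm]
    refine Finset.sum_congr rfl fun j _ => ?_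
    rw [inner_smul_left, inner_sum, Finset.mul_sum]
    refine Finset.sum_congr rfl fun i _ => ?_
    rw [inner_smul_right]; ring
  have h2 : ⟪u, u⟫_ℂ = ∑ i, ∑ j, (a i * w (i : ℕ)) * (starRingEnd ℂ) (a j * w (j : ℕ)) *
      ⟪k (lam (j : ℕ)), k (lam (i : ℕ))⟫_ℂ := by
    rw [hu, sum_inner, Finset.sum_comm]
    refine Finset.sum_congr rfl fun j _ => ?_
    rw [inner_smul_left, inner_sum, Finset.mul_sum]
    refine Finset.sum_congr rfl fun i _ => ?_
    rw [inner_smul_right]; ring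
  have expand : ∑ i, ∑ j, a i * (starRingEnd ℂ) (a j) *
      (⟪l (lam (j : ℕ)), l (lam (i : ℕ))⟫_ℂ -
        w (i : ℕ) * (starRingEnd ℂ) (w (j : ℕ)) * ⟪k (lam (j : ℕ)), k (lam (i : ℕ))⟫_ℂ)
      = ⟪v, v⟫_ℂ - ⟪u, u⟫_ℂ := by
    rw [h1, h2, ← Finset.sum_sub_distrib]
    refine Finset.sum_congr rfl fun i _ => ?_
    rw [← Finset.sum_sub_distrib]
    refine Finset.sum_congr rfl fun j _ => ?_
    rw [map_mul]
    ring
  rw [expand, inner_self_eq_norm_sq_to_K, inner_self_eq_norm_sq_to_K]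
  have hnorm : ‖u‖ ^ 2 ≤ ‖v‖ ^ 2 := by
    have hv_eq : ∑ m ∈ Finset.range n,
        (if h : m < n then a ⟨m, h⟩ * (‖l (lam m)‖ : ℂ) else 0) •
          (‖l (lam m)‖⁻¹ • l (lam m)) = v :=
      sum_norm_smul (fun m => l (lam m)) (fun m => hl (lam m)) n a
    have hlow := hcl (Finset.range n)
      (fun m => if h : m < n then a ⟨m, h⟩ * (‖l (lam m)‖ : ℂ) else 0)
    rw [hv_eq, sum_norm_sq_eq (fun m => l (lam m)) n a] at hlow
    have hu_eq : ∑ m ∈ Finset.range n,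
        (if h : m < n then (fun i : Fin n => a i * w (i : ℕ)) ⟨m, h⟩ * (‖k (lam m)‖ : ℂ) else 0) •
          (‖k (lam m)‖⁻¹ • k (lam m)) = u :=
      sum_norm_smul (fun m => k (lam m)) (fun m => hk (lam m)) n
        (fun i : Fin n => a i * w (i : ℕ))
    have hup := hC (Finset.range n)
      (fun m => if h : m < n then (fun i : Fin n => a i * w (i : ℕ)) ⟨m, h⟩ * (‖k (lam m)‖ : ℂ) else 0)
    rw [hu_eq, sum_norm_sq_eq (fun m => k (lam m)) n (fun i : Fin n => a i * w (i : ℕ))] at hup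
    have hterm : ∀ i : Fin n, ‖a i * w (i : ℕ)‖ ^ 2 * ‖k (lam (i : ℕ))‖ ^ 2
        ≤ c / C * (‖a i‖ ^ 2 * ‖l (lam (i : ℕ))‖ ^ 2) := by
      intro i
      have h3 := hw (i : ℕ)
      have h4 : (0 : ℝ) ≤ ‖a i‖ ^ 2 := sq_nonneg _
      calc ‖a i * w (i : ℕ)‖ ^ 2 * ‖k (lam (i : ℕ))‖ ^ 2
          = ‖a i‖ ^ 2 * (‖w (i : ℕ)‖ ^ 2 * ‖k (lam (i : ℕ))‖ ^ 2) := by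
            rw [norm_mul]; ring
        _ ≤ ‖a i‖ ^ 2 * (c / C * ‖l (lam (i : ℕ))‖ ^ 2) := mul_le_mul_of_nonneg_left h3 h4
        _ = c / C * (‖a i‖ ^ 2 * ‖l (lam (i : ℕ))‖ ^ 2) := by ring
    have hsum_le : ∑ i : Fin n, ‖a i * w (i : ℕ)‖ ^ 2 * ‖k (lam (i : ℕ))‖ ^ 2
        ≤ c / C * ∑ i : Fin n, ‖a i‖ ^ 2 * ‖l (lam (i : ℕ))‖ ^ 2 := by
      rw [Finset.mul_sum]
      exact Finset.sum_le_sum fun i _ => hterm i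
    calc ‖u‖ ^ 2 ≤ C * ∑ i : Fin n, ‖a i * w (i : ℕ)‖ ^ 2 * ‖k (lam (i : ℕ))‖ ^ 2 := hup
      _ ≤ C * (c / C * ∑ i : Fin n, ‖a i‖ ^ 2 * ‖l (lam (i : ℕ))‖ ^ 2) :=
          mul_le_mul_of_nonneg_left hsum_le (le_of_lt hC0)
      _ = c * ∑ i : Fin n, ‖a i‖ ^ 2 * ‖l (lam (i : ℕ))‖ ^ 2 := by
          field_simp
      _ ≤ ‖v‖ ^ 2 := hlow
  have hle : ((‖u‖ : ℂ)) ^ 2 ≤ ((‖v‖ : ℂ)) ^ 2 := by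
    rw [← Complex.ofReal_pow, ← Complex.ofReal_pow, Complex.real_le_real]
    exact hnorm
  exact sub_nonneg.mpr hle

private lemma exists_limit_op {Hk Hl : Type*}
    [NormedAddCommGroup Hk] [InnerProductSpace ℂ Hk] [CompleteSpace Hk]
    [NormedAddCommGroup Hl] [InnerProductSpace ℂ Hl] [CompleteSpace Hl]
    (L : Hl → Hk → ℂ)
    (h1 : ∀ v₁ v₂ u, L (v₁ + v₂) u = L v₁ u + L v₂ u)
    (h2 : ∀ (b : ℂ) (v : Hl) (u : Hk), L (b • v) u = (starRingEnd ℂ) b * L v u)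
    (h3 : ∀ v u₁ u₂, L v (u₁ + u₂) = L v u₁ + L v u₂)
    (h4 : ∀ (b : ℂ) (v : Hl) (u : Hk), L v (b • u) = b * L v u)
    (h5 : ∀ v u, ‖L v u‖ ≤ ‖v‖ * ‖u‖) :
    ∃ T : Hk →L[ℂ] Hl, ∀ v u, ⟪v, T u⟫_ℂ = L v u := by
  have Fdef : ∀ u : Hk, ∃ f : Hl →L[ℂ] ℂ,
      (∀ v, f v = (starRingEnd ℂ) (L v u)) ∧ ‖f‖ ≤ ‖u‖ := by
    intro u
    refine ⟨LinearMap.mkContinuous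
      { toFun := fun v => (starRingEnd ℂ) (L v u)
        map_add' := fun v₁ v₂ => by
          show (starRingEnd ℂ) (L (v₁ + v₂) u)
            = (starRingEnd ℂ) (L v₁ u) + (starRingEnd ℂ) (L v₂ u)
          rw [h1, map_add]
        map_smul' := fun b v => by
          show (starRingEnd ℂ) (L (b • v) u) = b • (starRingEnd ℂ) (L v u)
          rw [h2, map_mul, Complex.conj_conj, smul_eq_mul] }
      ‖u‖ (fun v => by
        show ‖(starRingEnd ℂ) (L v u)‖ ≤ ‖u‖ * ‖v‖
        rw [RCLike.norm_conj, mul_comm]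
        exact h5 v u), fun v => rfl, ?_⟩
    exact LinearMap.mkContinuous_norm_le _ (norm_nonneg u) _
  choose F hF hFnorm using Fdef
  have hFadd : ∀ u₁ u₂, F (u₁ + u₂) = F u₁ + F u₂ := by
    intro u₁ u₂
    ext v
    rw [ContinuousLinearMap.add_apply, hF, hF, hF, h3, map_add]
  have hFsmul : ∀ (b : ℂ) u, F (b • u) = (starRingEnd ℂ) b • F u := by
    intro b u
    ext v
    rw [ContinuousLinearMap.smul_apply, hF, hF, h4, map_mul, smul_eq_mul]
  let T0 : Hk →ₗ[ℂ] Hl :=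
    { toFun := fun u => (InnerProductSpace.toDual ℂ Hl).symm (F u)
      map_add' := fun u₁ u₂ => by
        show (InnerProductSpace.toDual ℂ Hl).symm (F (u₁ + u₂))
          = (InnerProductSpace.toDual ℂ Hl).symm (F u₁)
            + (InnerProductSpace.toDual ℂ Hl).symm (F u₂)
        rw [hFadd, map_add]
      map_smul' := fun b u => by
        show (InnerProductSpace.toDual ℂ Hl).symm (F (b • u))
          = b • (InnerProductSpace.toDual ℂ Hl).symm (F u)
        rw [hFsmul, LinearIsometryEquiv.map_smulₛₗ]
        simp }
  have hT0_bound : ∀ u, ‖T0 u‖ ≤ 1 * ‖u‖ := by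
    intro u
    rw [one_mul]
    have : ‖(InnerProductSpace.toDual ℂ Hl).symm (F u)‖ = ‖F u‖ :=
      LinearIsometryEquiv.norm_map _ _
    calc ‖T0 u‖ = ‖F u‖ := this
      _ ≤ ‖u‖ := hFnorm u
  refine ⟨T0.mkContinuous 1 hT0_bound, fun v u => ?_⟩
  have h6 : (T0.mkContinuous 1 hT0_bound) u = (InnerProductSpace.toDual ℂ Hl).symm (F u) := rfl
  rw [h6, ← inner_conj_symm, InnerProductSpace.toDual_symm_apply, hF, Complex.conj_conj]

theorem statement6' {X Hk Hl : Type*}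
    [NormedAddCommGroup Hk] [InnerProductSpace ℂ Hk] [CompleteSpace Hk]
    [NormedAddCommGroup Hl] [InnerProductSpace ℂ Hl] [CompleteSpace Hl]
    (k : X → Hk) (hk : ∀ x, k x ≠ 0)
    (l : X → Hl) (hl : ∀ x, l x ≠ 0)
    (hpick : PickPair k l)
    (lam : ℕ → X) (hinj : Function.Injective lam)
    (hbdd : GramBdd k lam) (hbelow : GramBddBelow l lam) :
    InterpMultPair k l lam := by
  intro α hα
  obtain ⟨B, hB⟩ := hα
  have hB0 : (0 : ℝ) ≤ B := le_trans (norm_nonneg _) (hB 0)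
  obtain ⟨C, hC0, hC⟩ := hbdd
  obtain ⟨c, hc0, hcl⟩ := hbelow
  have hkpos : ∀ x, (0 : ℝ) < ‖k x‖ := fun x => norm_pos_iff.mpr (hk x)
  have hlpos : ∀ x, (0 : ℝ) < ‖l x‖ := fun x => norm_pos_iff.mpr (hl x)
  set ε : ℝ := Real.sqrt (c / C) / (B + 1) with hε_def
  have hε0 : 0 < ε := div_pos (Real.sqrt_pos.mpr (div_pos hc0 hC0)) (by linarith)
  have hεC : (ε : ℂ) ≠ 0 := by
    exact_mod_cast ne_of_gt hε0
  have hεkey : ε ^ 2 * B ^ 2 ≤ c / C := by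
    have h1 : ε ^ 2 = (c / C) / (B + 1) ^ 2 := by
      rw [hε_def, div_pow, Real.sq_sqrt (le_of_lt (div_pos hc0 hC0))]
    have hpos : (0 : ℝ) < (B + 1) ^ 2 := by positivity
    rw [h1, div_div, div_mul_eq_mul_div, div_le_div_iff₀ (by positivity) (by positivity)]
    nlinarith [mul_pos hc0 hC0, mul_nonneg (le_of_lt (mul_pos hc0 hC0)) hB0]
  set w : ℕ → ℂ := fun i => (ε : ℂ) * (α i * (‖l (lam i)‖ : ℂ) / (‖k (lam i)‖ : ℂ)) with hw_def
  have hw_bound : ∀ i : ℕ, ‖w i‖ ^ 2 * ‖k (lam i)‖ ^ 2 ≤ c / C * ‖l (lam i)‖ ^ 2 := by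
    intro i
    have hknz : ‖k (lam i)‖ ≠ 0 := ne_of_gt (hkpos _)
    have hwnorm : ‖w i‖ = ε * (‖α i‖ * ‖l (lam i)‖ / ‖k (lam i)‖) := by
      rw [hw_def]
      simp only [norm_mul, norm_div, Complex.norm_real, Real.norm_eq_abs, abs_norm,
        abs_of_pos hε0]
    rw [hwnorm]
    have h5 : (ε * (‖α i‖ * ‖l (lam i)‖ / ‖k (lam i)‖)) ^ 2 * ‖k (lam i)‖ ^ 2
        = ε ^ 2 * ‖α i‖ ^ 2 * ‖l (lam i)‖ ^ 2 := by
      field_simp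
    rw [h5]
    have hα2 : ‖α i‖ ^ 2 ≤ B ^ 2 := by nlinarith [hB i, norm_nonneg (α i)]
    calc ε ^ 2 * ‖α i‖ ^ 2 * ‖l (lam i)‖ ^ 2 ≤ ε ^ 2 * B ^ 2 * ‖l (lam i)‖ ^ 2 :=
          mul_le_mul_of_nonneg_right
            (mul_le_mul_of_nonneg_left hα2 (sq_nonneg ε)) (sq_nonneg _)
      _ ≤ c / C * ‖l (lam i)‖ ^ 2 :=
          mul_le_mul_of_nonneg_right hεkey (sq_nonneg _)
  -- apply the Pick property for each n
  have hmult : ∀ n : ℕ, ∃ (φ : X → ℂ) (T : Hk →L[ℂ] Hl), IsMultiplier k l φ T ∧ ‖T‖ ≤ 1 ∧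
      ∀ i : Fin n, φ (lam (i : ℕ)) = w (i : ℕ) := by
    intro n
    exact hpick n (fun i => lam (i : ℕ))
      (fun i j h => Fin.val_injective (hinj h)) (fun i => w (i : ℕ))
      (psd_lemma k hk l hl lam C c hC0 hC hcl w hw_bound n)
  choose φs Ts hTmult hTnorm hTval using hmult
  -- an ultrafilter extending atTop
  obtain ⟨U, hU⟩ := Filter.exists_ultrafilter_le (Filter.atTop : Filter ℕ)
  -- bound on the symbols
  have hφbound : ∀ n x, ‖φs n x‖ ≤ ‖l x‖ / ‖k x‖ := by
    intro n x
    have h1 : ‖(starRingEnd ℂ) (φs n x) • k x‖ ≤ ‖l x‖ := by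
      rw [← hTmult n x]
      calc ‖ContinuousLinearMap.adjoint (Ts n) (l x)‖
          ≤ ‖ContinuousLinearMap.adjoint (Ts n)‖ * ‖l x‖ :=
            ContinuousLinearMap.le_opNorm _ _
        _ ≤ 1 * ‖l x‖ := by
            apply mul_le_mul_of_nonneg_right _ (norm_nonneg _)
            rw [ContinuousLinearMap.adjoint.norm_map]
            exact hTnorm n
        _ = ‖l x‖ := one_mul _
    rw [norm_smul, RCLike.norm_conj] at h1
    rw [le_div_iff₀ (hkpos x)]
    exact h1
  -- limit symbol
  have hφex : ∀ x, ∃ z, Tendsto (fun n => φs n x) (U : Filter ℕ) (nhds z) :=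
    fun x => ulim_exists U _ _ (fun n => hφbound n x)
  choose φ hφ using hφex
  -- limit sesquilinear form
  have hLex : ∀ (v : Hl) (u : Hk), ∃ z,
      Tendsto (fun n => ⟪v, Ts n u⟫_ℂ) (U : Filter ℕ) (nhds z) := by
    intro v u
    refine ulim_exists U _ (‖v‖ * ‖u‖) fun n => ?_
    calc ‖⟪v, Ts n u⟫_ℂ‖ ≤ ‖v‖ * ‖Ts n u‖ := norm_inner_le_norm _ _
      _ ≤ ‖v‖ * (‖Ts n‖ * ‖u‖) :=
          mul_le_mul_of_nonneg_left ((Ts n).le_opNorm u) (norm_nonneg v)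
      _ ≤ ‖v‖ * (1 * ‖u‖) := by
          have := hTnorm n
          have h2 : ‖Ts n‖ * ‖u‖ ≤ 1 * ‖u‖ :=
            mul_le_mul_of_nonneg_right this (norm_nonneg u)
          exact mul_le_mul_of_nonneg_left h2 (norm_nonneg v)
      _ = ‖v‖ * ‖u‖ := by rw [one_mul]
  choose L hL using hLex
  have hL_norm : ∀ v u, ‖L v u‖ ≤ ‖v‖ * ‖u‖ := by
    intro v u
    refine le_of_tendsto (hL v u).norm (Filter.Eventually.of_forall fun n => ?_)
    calc ‖⟪v, Ts n u⟫_ℂ‖ ≤ ‖v‖ * ‖Ts n u‖ := norm_inner_le_norm _ _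
      _ ≤ ‖v‖ * (‖Ts n‖ * ‖u‖) :=
          mul_le_mul_of_nonneg_left ((Ts n).le_opNorm u) (norm_nonneg v)
      _ ≤ ‖v‖ * (1 * ‖u‖) :=
          mul_le_mul_of_nonneg_left
            (mul_le_mul_of_nonneg_right (hTnorm n) (norm_nonneg u)) (norm_nonneg v)
      _ = ‖v‖ * ‖u‖ := by rw [one_mul]
  have hL_add_left : ∀ v₁ v₂ u, L (v₁ + v₂) u = L v₁ u + L v₂ u := by
    intro v₁ v₂ u
    refine tendsto_nhds_unique (hL (v₁ + v₂) u) ?_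
    have := (hL v₁ u).add (hL v₂ u)
    simpa [inner_add_left] using this
  have hL_smul_left : ∀ (b : ℂ) v u, L (b • v) u = (starRingEnd ℂ) b * L v u := by
    intro b v u
    refine tendsto_nhds_unique (hL (b • v) u) ?_
    have := (hL v u).const_mul ((starRingEnd ℂ) b)
    simpa [inner_smul_left, mul_comm] using this
  have hL_add_right : ∀ v u₁ u₂, L v (u₁ + u₂) = L v u₁ + L v u₂ := by
    intro v u₁ u₂
    refine tendsto_nhds_unique (hL v (u₁ + u₂)) ?_
    have := (hL v u₁).add (hL v u₂)
    simpa [inner_add_right] using this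
  have hL_smul_right : ∀ (b : ℂ) v u, L v (b • u) = b * L v u := by
    intro b v u
    refine tendsto_nhds_unique (hL v (b • u)) ?_
    have := (hL v u).const_mul b
    simpa [inner_smul_right] using this
  obtain ⟨T, hT_inner⟩ := exists_limit_op L hL_add_left hL_smul_left
    hL_add_right hL_smul_right hL_norm
  -- the multiplier identity for the limit
  have hadj : ∀ x, ContinuousLinearMap.adjoint T (l x) = (starRingEnd ℂ) (φ x) • k x := by
    intro x
    refine ext_inner_right ℂ fun u => ?_
    rw [ContinuousLinearMap.adjoint_inner_left, hT_inner]
    have h2 : ∀ n, ⟪l x, Ts n u⟫_ℂ = φs n x * ⟪k x, u⟫_ℂ := by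
      intro n
      rw [← ContinuousLinearMap.adjoint_inner_left (Ts n), hTmult n x, inner_smul_left,
        Complex.conj_conj]
    have h3 : Tendsto (fun n => ⟪l x, Ts n u⟫_ℂ) (U : Filter ℕ)
        (nhds ((φ x) * ⟪k x, u⟫_ℂ)) := by
      simp only [h2]
      exact (hφ x).mul_const _
    have h4 : L (l x) u = φ x * ⟪k x, u⟫_ℂ := tendsto_nhds_unique (hL (l x) u) h3
    rw [h4, inner_smul_left, Complex.conj_conj]
  -- values of the limit symbol
  have hφval : ∀ i : ℕ, φ (lam i) = w i := by
    intro i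
    refine tendsto_nhds_unique (hφ (lam i)) ?_
    have hev : ∀ᶠ n in (U : Filter ℕ), φs n (lam i) = w i := by
      apply Filter.Eventually.filter_mono hU
      filter_upwards [Filter.eventually_ge_atTop (i + 1)] with n hn
      have hi : i < n := hn
      exact hTval n ⟨i, hi⟩
    exact Filter.Tendsto.congr' (Filter.EventuallyEq.symm hev) tendsto_const_nhds
  -- final answer
  refine ⟨fun x => (ε : ℂ)⁻¹ * φ x, (ε : ℂ)⁻¹ • T, ?_, ?_⟩
  · intro x
    rw [map_smulₛₗ, ContinuousLinearMap.smul_apply, hadj x, smul_smul, map_mul, map_inv₀]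
  · intro i
    have h7 : φ (lam i) = (ε : ℂ) * (α i * (‖l (lam i)‖ : ℂ) / (‖k (lam i)‖ : ℂ)) := hφval i
    show (ε : ℂ)⁻¹ * φ (lam i) = α i * (‖l (lam i)‖ : ℂ) / (‖k (lam i)‖ : ℂ)
    rw [h7, ← mul_assoc, inv_mul_cancel₀ hεC, one_mul]

/-- **Proposition 4.1 (ii)**: if the pair `(k, ℓ)` has the Pick property, and the Gram
matrix with respect to `k` is bounded while the Gram matrix with respect to `ℓ` is bounded
below, then the sequence is interpolating for `Mult(H_k, H_ℓ)`. -/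
theorem statement6 {X Hk Hl : Type*}
    [NormedAddCommGroup Hk] [InnerProductSpace ℂ Hk] [CompleteSpace Hk]
    [NormedAddCommGroup Hl] [InnerProductSpace ℂ Hl] [CompleteSpace Hl]
    (k : X → Hk) (hk : ∀ x, k x ≠ 0)
    (hdense_k : Dense ((Submodule.span ℂ (Set.range k) : Submodule ℂ Hk) : Set Hk))
    (l : X → Hl) (hl : ∀ x, l x ≠ 0)
    (hdense_l : Dense ((Submodule.span ℂ (Set.range l) : Submodule ℂ Hl) : Set Hl))
    (hpick : PickPair k l)
    (lam : ℕ → X) (hinj : Function.Injective lam)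
    (hbdd : GramBdd k lam) (hbelow : GramBddBelow l lam) :
    InterpMultPair k l lam :=
  statement6' k hk l hl hpick lam hinj hbdd hbelow
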